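/- arXiv:1309.6528 — 2 statements merged into one kernel-verified Lean document; each statement's English description precedes it below -/
import Mathlib

section
/- If G is a finite group acting by isometries on a nondegenerate lattice Λ (with Λ^G nondegenerate), then the induced action of G on the discriminant group A_{Λ^G} = (Λ^G)*/Λ^G is trivial, and hence (via the canonical isomorphism for unimodular Λ) the induced action of G on A_{Λ_G} is trivial. -/
open Module LinearMap

/-- If `G` is a finite group acting by isometries on a unimodular lattice
`Λ` (with `Λ^G` nondegenerate), then the induced action of `G` on the discriminant group
`A_{Λ^G} = (Λ^G)^*/Λ^G` is trivial, and hence the induced action of `G` on `A_{Λ_G}` is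
trivial; i.e. for every `g ∈ G` and every `x` in the dual lattice `M^* = (dual M) ∩ (ℚ-span M)`
of `M = Λ^G` (resp. `M = Λ_G`) one has `g·x − x ∈ M`. -/
theorem stmt6 (V : Type*) [AddCommGroup V] [Module ℚ V] [FiniteDimensional ℚ V]
    (B : LinearMap.BilinForm ℚ V)
    (hsymm : ∀ x y, B x y = B y x)
    (hnondeg : ∀ x : V, (∀ y, B x y = 0) → x = 0)
    (Λ : Submodule ℤ V) (hfg : Λ.FG)
    (hfull : Submodule.span ℚ (Λ : Set V) = ⊤)
    (hint : Λ ≤ B.dualSubmodule Λ)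
    (huni : B.dualSubmodule Λ = Λ)
    (G : Type*) [Group G] [Finite G]
    (ρ : G →* (V ≃ₗ[ℚ] V))
    (hisom : ∀ g x y, B (ρ g x) (ρ g y) = B x y)
    (hΛ : ∀ g, ∀ x ∈ Λ, ρ g x ∈ Λ)
    -- the invariant lattice Λ^G
    (Lfix : Submodule ℤ V)
    (hLfix : ∀ x, x ∈ Lfix ↔ x ∈ Λ ∧ ∀ g, ρ g x = x)
    -- Λ^G is nondegenerate
    (hfixnondeg : ∀ x ∈ Submodule.span ℚ (Lfix : Set V),
      (∀ y ∈ Submodule.span ℚ (Lfix : Set V), B x y = 0) → x = 0)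
    -- the coinvariant lattice Λ_G = (Λ^G)^⊥
    (Lco : Submodule ℤ V)
    (hLco : ∀ x, x ∈ Lco ↔ x ∈ Λ ∧ ∀ y ∈ Lfix, B x y = 0) :
    (∀ g : G, ∀ x ∈ B.dualSubmodule Lfix ⊓
        Submodule.restrictScalars ℤ (Submodule.span ℚ (Lfix : Set V)),
      ρ g x - x ∈ Lfix) ∧
    (∀ g : G, ∀ x ∈ B.dualSubmodule Lco ⊓
        Submodule.restrictScalars ℤ (Submodule.span ℚ (Lco : Set V)),
      ρ g x - x ∈ Lco) := by
  -- `ρ g (ρ g⁻¹ y) = y`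
  have hcancel : ∀ (g : G) (y : V), ρ g (ρ g⁻¹ y) = y := by
    intro g y
    show (ρ g * ρ g⁻¹) y = y
    rw [← map_mul, mul_inv_cancel, map_one]
    rfl
  -- `B (ρ g x) y = B x (ρ g⁻¹ y)`
  have hadj : ∀ (g : G) (x y : V), B (ρ g x) y = B x (ρ g⁻¹ y) := by
    intro g x y
    conv_lhs => rw [← hcancel g y]
    exact hisom g x (ρ g⁻¹ y)
  constructor
  · -- invariant part: x is fixed, so ρ g x - x = 0
    intro g x hx
    have hfix : ρ g x = x := by
      have hle : Submodule.span ℚ (Lfix : Set V) ≤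
          LinearMap.ker ((ρ g : V →ₗ[ℚ] V) - LinearMap.id) := by
        rw [Submodule.span_le]
        intro y hy
        have := ((hLfix y).mp hy).2 g
        simp [LinearMap.mem_ker, this, sub_eq_zero]
      have := hle hx.2
      rw [LinearMap.mem_ker, LinearMap.sub_apply, sub_eq_zero] at this
      simpa using this
    rw [hfix, sub_self]
    exact Lfix.zero_mem
  · intro g x hx
    have hxd : x ∈ B.dualSubmodule Lco := hx.1
    rw [hLco]
    constructor
    · -- ρ g x - x ∈ Λ = Λ^*
      rw [← huni]
      intro y hy
      have hmem : ρ g⁻¹ y - y ∈ Lco := by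
        rw [hLco]
        refine ⟨Λ.sub_mem (hΛ g⁻¹ y hy) hy, ?_⟩
        intro z hz
        have hz' : ρ g⁻¹ z = z := ((hLfix z).mp hz).2 g⁻¹
        have : B (ρ g⁻¹ y) z = B y z := by
          conv_lhs => rw [← hz']
          exact hisom g⁻¹ y z
        rw [map_sub, LinearMap.sub_apply, this, sub_self]
      have hcalc : B (ρ g x - x) y = B x (ρ g⁻¹ y - y) := by
        rw [map_sub, LinearMap.sub_apply, hadj g x y, map_sub]
      rw [hcalc]
      exact hxd _ hmem
    · -- ρ g x - x ⊥ Lfix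
      intro y hy
      have hy' : ρ g y = y := ((hLfix y).mp hy).2 g
      have : B (ρ g x) y = B x y := by
        conv_lhs => rw [← hy']
        exact hisom g x y
      rw [map_sub, LinearMap.sub_apply, this, sub_self]
end

section
/- Let Λ be a unimodular lattice, M ⊆ Λ a primitive nondegenerate sublattice with orthogonal complement M^⊥, and G a finite group acting on M by isometries such that the induced action on the discriminant group A_M is trivial. Then the action of G extends to an action on Λ by isometries which restricts to the identity on M^⊥. -/
open Module LinearMap

/-- **Nikulin.** Let `Λ` be an even unimodular lattice, `M ⊆ Λ` a primitive
nondegenerate sublattice with nondegenerate orthogonal complement, and `G` a finite group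
acting on `M` by isometries such that the induced action on the discriminant group `A_M` is
trivial (for every `x` in the dual lattice of `M`, `g·x − x ∈ M`).  Then the action of `G`
extends to an action on `Λ` by isometries restricting to the identity on `M^⊥`. -/
theorem stmt13 (V : Type*) [AddCommGroup V] [Module ℚ V] [FiniteDimensional ℚ V]
    (B : LinearMap.BilinForm ℚ V)
    (hsymm : ∀ x y, B x y = B y x)
    (hnondeg : ∀ x : V, (∀ y, B x y = 0) → x = 0)
    (Λ : Submodule ℤ V) (hfg : Λ.FG)
    (hfull : Submodule.span ℚ (Λ : Set V) = ⊤)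
    (hint : Λ ≤ B.dualSubmodule Λ)
    (huni : B.dualSubmodule Λ = Λ)
    (heven : ∀ x ∈ Λ, ∃ k : ℤ, B x x = 2 * k)
    -- M is a primitive sublattice of Λ
    (M : Submodule ℤ V) (hMΛ : M ≤ Λ)
    (hprim : ∀ x ∈ Λ, ∀ m : ℤ, m ≠ 0 → m • x ∈ M → x ∈ M)
    -- M and M^⊥ are nondegenerate
    (hMnondeg : ∀ x ∈ Submodule.span ℚ (M : Set V),
      (∀ y ∈ Submodule.span ℚ (M : Set V), B x y = 0) → x = 0)
    (hMperpnondeg : ∀ x ∈ B.orthogonal (Submodule.span ℚ (M : Set V)),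
      (∀ y ∈ B.orthogonal (Submodule.span ℚ (M : Set V)), B x y = 0) → x = 0)
    -- G acts on M (and its rational span W) by isometries
    (G : Type*) [Group G] [Finite G]
    (W : Submodule ℚ V) (hW : W = Submodule.span ℚ (M : Set V))
    (ρ : G →* (W ≃ₗ[ℚ] W))
    (hisom : ∀ g, ∀ x y : W, B (ρ g x : V) (ρ g y : V) = B (x : V) (y : V))
    (hM : ∀ g, ∀ x : W, (x : V) ∈ M → (ρ g x : V) ∈ M)
    -- the induced action of G on the discriminant group A_M is trivial
    (htriv : ∀ g, ∀ x : W, (x : V) ∈ B.dualSubmodule M → (ρ g x : V) - (x : V) ∈ M) :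
    ∃ τ : G →* (V ≃ₗ[ℚ] V),
      (∀ g, ∀ x y : V, B (τ g x) (τ g y) = B x y) ∧
      (∀ g, ∀ x ∈ Λ, τ g x ∈ Λ) ∧
      (∀ g, ∀ x : W, τ g (x : V) = (ρ g x : V)) ∧
      (∀ g, ∀ y ∈ B.orthogonal W, τ g y = y) := by
  classical
  have hrefl : B.IsRefl := fun x y h => by rw [hsymm]; exact h
  -- B restricted to W is nondegenerate
  have hres : (B.restrict W).Nondegenerate := by
    refine (LinearMap.IsRefl.nondegenerate_iff_separatingLeft (B := B.restrict W) (fun x y h => hrefl _ _ h)).mpr ?_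
    intro x hx
    refine Subtype.ext (hMnondeg x (by rw [← hW]; exact x.2) (fun y hy => ?_))
    simpa using hx ⟨y, by rw [hW]; exact hy⟩
  have hcompl : IsCompl W (B.orthogonal W) :=
    B.isCompl_orthogonal_of_restrict_nondegenerate hrefl hres
  set Q := B.orthogonal W with hQ
  -- projections
  set pW : V →ₗ[ℚ] W := W.projectionOnto Q hcompl with hpW
  set pQ : V →ₗ[ℚ] Q := Q.projectionOnto W hcompl.symm with hpQ
  have hdecomp : ∀ x : V, (pW x : V) + (pQ x : V) = x := fun x =>
    Submodule.projection_add_projection_eq_self hcompl x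
  have hpWW : ∀ x : W, pW (x : V) = x := fun x =>
    Submodule.projectionOnto_apply_left hcompl x
  have hpWQ : ∀ x : Q, pW (x : V) = 0 := fun x =>
    Submodule.projectionOnto_apply_right hcompl x
  have hpQW : ∀ x : W, pQ (x : V) = 0 := fun x =>
    Submodule.projectionOnto_apply_right hcompl.symm x
  have hpQQ : ∀ x : Q, pQ (x : V) = x := fun x =>
    Submodule.projectionOnto_apply_left hcompl.symm x
  -- the extension
  set f : G → (V →ₗ[ℚ] V) := fun g =>
    W.subtype ∘ₗ (ρ g).toLinearMap ∘ₗ pW + Q.subtype ∘ₗ pQ with hfdef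
  have hf : ∀ g x, f g x = (ρ g (pW x) : V) + (pQ x : V) := fun g x => rfl
  have hfW : ∀ g, ∀ x : W, f g (x : V) = (ρ g x : V) := by
    intro g x
    rw [hf, hpWW, hpQW]; simp
  have hfQ : ∀ g, ∀ x : Q, f g (x : V) = (x : V) := by
    intro g x
    rw [hf, hpWQ, hpQQ]; simp
  have hfcomp : ∀ g h x, f g (f h x) = f (g * h) x := by
    intro g h x
    simp only [hf, map_add, hpWW, hpWQ, hpQW, hpQQ, map_zero, add_zero, zero_add, map_mul ρ]
    rfl
  have hfone : ∀ x, f 1 x = x := by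
    intro x
    rw [hf, map_one ρ]
    exact hdecomp x
  have hinv : ∀ g : G, (f g).comp (f g⁻¹) = LinearMap.id := by
    intro g
    ext x
    simp only [LinearMap.comp_apply, LinearMap.id_apply]
    rw [hfcomp, mul_inv_cancel, hfone]
  set τ' : G → (V ≃ₗ[ℚ] V) := fun g =>
    LinearEquiv.ofLinear (f g) (f g⁻¹) (hinv g) (by simpa using hinv g⁻¹) with hτ'
  have hτ'app : ∀ g x, τ' g x = f g x := fun g x => rfl
  refine ⟨MonoidHom.mk' τ' ?_, ?_, ?_, ?_, ?_⟩
  · intro a b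
    apply LinearEquiv.toLinearMap_injective
    ext x
    have : τ' a (τ' b x) = τ' (a * b) x := by
      rw [hτ'app, hτ'app, hτ'app, hfcomp]
    simpa using this.symm
  · -- isometry
    intro g x y
    simp only [MonoidHom.mk'_apply, hτ'app, hf]
    have hWQ : ∀ (w : W) (q : Q), B (w : V) (q : V) = 0 := fun w q => q.2 w w.2
    have expand : ∀ (w w' : W) (q q' : Q),
        B ((w : V) + q) ((w' : V) + q') = B (w : V) (w' : V) + B (q : V) (q' : V) := by
      intro w w' q q'
      simp only [map_add, LinearMap.add_apply]
      rw [hWQ w q', hsymm (q : V) (w' : V), hWQ w' q]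
      ring
    rw [expand, hisom, ← expand, hdecomp, hdecomp]
  · -- preserves Λ
    intro g x hx
    simp only [MonoidHom.mk'_apply, hτ'app, hf]
    have hdual : ((pW x : V)) ∈ B.dualSubmodule M := by
      intro m hm
      have hmW : (m : V) ∈ W := by rw [hW]; exact Submodule.subset_span hm
      have h0 : B (pQ x : V) m = 0 := by
        rw [hsymm]
        exact (pQ x).2 m hmW
      have : B (pW x : V) m = B x m := by
        conv_rhs => rw [← hdecomp x]
        simp only [map_add, LinearMap.add_apply, h0, add_zero]
      rw [this]
      exact hint hx m (hMΛ hm)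
    have hmem : (ρ g (pW x) : V) - (pW x : V) ∈ M := htriv g (pW x) hdual
    have : (ρ g (pW x) : V) + (pQ x : V)
        = ((ρ g (pW x) : V) - (pW x : V)) + ((pW x : V) + (pQ x : V)) := by abel
    rw [this, hdecomp]
    exact Λ.add_mem (hMΛ hmem) hx
  · intro g x
    simpa [hτ'app] using hfW g x
  · intro g y hy
    simpa [hτ'app] using hfQ g ⟨y, hy⟩
end
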